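/- A mechanism M is (ε, δ)-DP if and only if for all adjacent datasets D, D', every test distinguishing M(D) from M(D') satisfies TPR ≤ min{ e^ε·FPR + δ, 1 − e^{−ε}(1 − δ − FPR) }. -/

import Mathlib

open MeasureTheory Real Set

lemma aux_test_bound {Ω : Type*} [MeasurableSpace Ω]
    (μ ν : Measure Ω) [IsProbabilityMeasure μ] [IsProbabilityMeasure ν]
    (ε δ : ℝ) (hδ : 0 ≤ δ)
    (hDP : ∀ S : Set Ω, MeasurableSet S → (μ S).toReal ≤ Real.exp ε * (ν S).toReal + δ)
    (t : Ω → ℝ) (ht : Measurable t) (h0 : ∀ ω, 0 ≤ t ω) (h1 : ∀ ω, t ω ≤ 1) :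
    ∫ ω, t ω ∂μ ≤ Real.exp ε * ∫ ω, t ω ∂ν + δ := by
  have hmeas : ∀ (κ : Measure Ω), Measurable (fun s : ℝ => (κ {a | s ≤ t a}).toReal) := by
    intro κ
    apply Measurable.ennreal_toReal
    exact Antitone.measurable (fun _ _ hst => measure_mono (fun _ h => le_trans hst h))
  have hint : ∀ (κ : Measure Ω) [IsProbabilityMeasure κ], Integrable t κ := by
    intro κ _
    refine (integrable_const (1:ℝ)).mono' ht.aestronglyMeasurable ?_
    exact Filter.Eventually.of_forall (fun ω => by rw [Real.norm_eq_abs, abs_of_nonneg (h0 ω)]; exact h1 ω)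
  have hle : ∀ (κ : Measure Ω) [IsProbabilityMeasure κ],
      ∫ ω, t ω ∂κ = ∫ s in Ioc (0:ℝ) 1, (κ {a | s ≤ t a}).toReal := by
    intro κ _
    exact (hint κ).integral_eq_integral_Ioc_meas_le
      (Filter.Eventually.of_forall h0) (Filter.Eventually.of_forall h1)
  rw [hle μ, hle ν]
  have hintκ : ∀ (κ : Measure Ω) [IsProbabilityMeasure κ], IntegrableOn (fun s : ℝ => (κ {a | s ≤ t a}).toReal)
      (Ioc (0:ℝ) 1) := by
    intro κ _
    have hc : IntegrableOn (fun _ : ℝ => (1:ℝ)) (Ioc (0:ℝ) 1) := by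
      apply (integrableOn_const_iff).mpr; right; simp
    refine hc.mono' (hmeas κ).aestronglyMeasurable ?_
    refine Filter.Eventually.of_forall (fun s => ?_)
    rw [Real.norm_eq_abs, abs_of_nonneg ENNReal.toReal_nonneg]
    exact ENNReal.toReal_le_of_le_ofReal zero_le_one (by simpa using prob_le_one (μ := κ) (s := {a | s ≤ t a}))
  calc ∫ s in Ioc (0:ℝ) 1, (μ {a | s ≤ t a}).toReal
      ≤ ∫ s in Ioc (0:ℝ) 1, (Real.exp ε * (ν {a | s ≤ t a}).toReal + δ) := by
        refine setIntegral_mono_on (hintκ μ) ?_ measurableSet_Ioc (fun s _ => ?_)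
        · exact ((hintκ ν).const_mul _).add ((integrableOn_const_iff).mpr (Or.inr (by simp)))
        · exact hDP _ (measurableSet_le measurable_const ht)
    _ = (Real.exp ε * ∫ s in Ioc (0:ℝ) 1, (ν {a | s ≤ t a}).toReal) + δ := by
        rw [integral_add ((hintκ ν).const_mul _) ((integrableOn_const_iff).mpr (Or.inr (by simp))),
          integral_const_mul, setIntegral_const]
        norm_num [Real.volume_Ioc]

/-- Hypothesis-testing characterization of `(ε, δ)`-DP (Kairouz et al.):
`M` is `(ε, δ)`-DP iff for all adjacent datasets, every (possibly randomized) test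
satisfies `TPR ≤ min (exp ε * FPR + δ) (1 - exp (-ε) * (1 - δ - FPR))`. -/
theorem dp_iff_tpr_bound
    {D Ω : Type*} [MeasurableSpace Ω]
    (M : D → Measure Ω) (hprob : ∀ d, IsProbabilityMeasure (M d))
    (adj : D → D → Prop) (hsymm : ∀ a b, adj a b → adj b a)
    (ε δ : ℝ) (hε : 0 ≤ ε) (hδ : 0 ≤ δ) :
    (∀ d d', adj d d' → ∀ S : Set Ω, MeasurableSet S →
        (M d S).toReal ≤ Real.exp ε * (M d' S).toReal + δ)
    ↔ (∀ d d', adj d d' →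
        ∀ t : Ω → ℝ, Measurable t → (∀ ω, 0 ≤ t ω) → (∀ ω, t ω ≤ 1) →
          ∫ ω, t ω ∂(M d) ≤
            min (Real.exp ε * ∫ ω, t ω ∂(M d') + δ)
              (1 - Real.exp (-ε) * (1 - δ - ∫ ω, t ω ∂(M d')))) := by
  have hprob' := hprob
  constructor
  · intro hDP d d' hadj t ht h0 h1
    haveI := hprob d; haveI := hprob d'
    refine le_min ?_ ?_
    · exact aux_test_bound (M d) (M d') ε δ hδ (hDP d d' hadj) t ht h0 h1
    · -- apply to 1 - t with swapped datasets
      have key : ∫ ω, (1 - t ω) ∂(M d') ≤ Real.exp ε * ∫ ω, (1 - t ω) ∂(M d) + δ :=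
        aux_test_bound (M d') (M d) ε δ hδ (hDP d' d (hsymm _ _ hadj)) _
          (measurable_const.sub ht) (fun ω => by linarith [h1 ω]) (fun ω => by linarith [h0 ω])
      have hi : ∀ (κ : Measure Ω) [IsProbabilityMeasure κ], Integrable t κ := by
        intro κ _
        refine (integrable_const (1:ℝ)).mono' ht.aestronglyMeasurable ?_
        exact Filter.Eventually.of_forall (fun ω => by rw [Real.norm_eq_abs, abs_of_nonneg (h0 ω)]; exact h1 ω)
      rw [integral_sub (integrable_const 1) (hi (M d')), integral_sub (integrable_const 1) (hi (M d))] at key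
      simp only [integral_const, probReal_univ, smul_eq_mul, one_mul, mul_one] at key
      have hexp : Real.exp (-ε) * Real.exp ε = 1 := by
        rw [← Real.exp_add]; simp
      have key2 : Real.exp (-ε) * (1 - ∫ ω, t ω ∂(M d')) ≤
          (1 - ∫ ω, t ω ∂(M d)) + Real.exp (-ε) * δ := by
        calc Real.exp (-ε) * (1 - ∫ ω, t ω ∂(M d'))
            ≤ Real.exp (-ε) * (Real.exp ε * (1 - ∫ ω, t ω ∂(M d)) + δ) :=
              mul_le_mul_of_nonneg_left key (Real.exp_pos (-ε)).le
          _ = (1 - ∫ ω, t ω ∂(M d)) + Real.exp (-ε) * δ := by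
              rw [mul_add, ← mul_assoc, hexp]; ring
      linarith [key2]
  · intro hT d d' hadj S hS
    haveI := hprob d; haveI := hprob d'
    have := hT d d' hadj (S.indicator (fun _ => 1)) (measurable_one.indicator hS)
      (fun ω => Set.indicator_nonneg (fun _ _ => zero_le_one) ω)
      (fun ω => Set.indicator_le_self' (fun _ _ => zero_le_one) ω)
    rw [integral_indicator_const _ hS, integral_indicator_const _ hS] at this
    simpa [measureReal_def] using (le_trans this (min_le_left _ _))
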